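/- arXiv:2204.10745 — 2 statements merged into one kernel-verified Lean document; each statement's English description precedes it below -/
import Mathlib

section
/- Let φ : ℝ_{≥0} → ℝ_{≥0} be an N-function with right-derivative φ', and for a ≥ 0 define the shifted function φ_a by φ_a(t) := ∫₀^t φ'(a+s)·s/(a+s) ds. Then for each a ≥ 0, φ_a is again an N-function, i.e., φ_a is convex with φ_a(0) = 0, φ_a(t) > 0 for t > 0, φ_a(t)/t → 0 as t → 0, and φ_a(t)/t → ∞ as t → ∞. -/
open Filter intervalIntegral


/-- An N-function: a convex function `φ : ℝ_{≥0} → ℝ_{≥0}` with `φ(0) = 0`,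
`φ(t) > 0` for `t > 0`, `φ(t)/t → 0` as `t → 0⁺` and `φ(t)/t → ∞` as `t → ∞`. -/
def IsNFunction (φ : ℝ → ℝ) : Prop :=
  ConvexOn ℝ (Set.Ici 0) φ ∧ (∀ t ≥ (0:ℝ), 0 ≤ φ t) ∧ φ 0 = 0 ∧
  (∀ t > (0:ℝ), 0 < φ t) ∧
  Filter.Tendsto (fun t => φ t / t) (nhdsWithin 0 (Set.Ioi 0)) (nhds 0) ∧
  Filter.Tendsto (fun t => φ t / t) Filter.atTop Filter.atTop

lemma integral_of_monotone_isNFunction (g : ℝ → ℝ)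
    (hg : MonotoneOn g (Set.Ici 0)) (hg0 : g 0 = 0)
    (hgpos : ∀ t > (0:ℝ), 0 < g t)
    (hglim : Filter.Tendsto g (nhdsWithin 0 (Set.Ioi 0)) (nhds 0))
    (hgtop : Filter.Tendsto g Filter.atTop Filter.atTop) :
    IsNFunction (fun t => ∫ s in (0:ℝ)..t, g s) := by
  have hgnn : ∀ t ≥ (0:ℝ), 0 ≤ g t := fun t ht => hg0 ▸ hg Set.self_mem_Ici ht ht
  have hint : ∀ x y : ℝ, 0 ≤ x → x ≤ y → IntervalIntegrable g MeasureTheory.volume x y := by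
    intro x y hx hxy
    refine (hg.mono ?_).intervalIntegrable
    rw [Set.uIcc_of_le hxy]
    exact fun s hs => le_trans hx hs.1
  have lemA : ∀ x y : ℝ, 0 ≤ x → x ≤ y → (y - x) * g x ≤ ∫ s in x..y, g s := by
    intro x y hx hxy
    have := integral_mono_on hxy (_root_.intervalIntegrable_const (c := g x)) (hint x y hx hxy)
      (fun s hs => hg hx (le_trans hx hs.1) hs.1)
    simpa using this
  have lemB : ∀ x y : ℝ, 0 ≤ x → x ≤ y → (∫ s in x..y, g s) ≤ (y - x) * g y := by
    intro x y hx hxy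
    have := integral_mono_on hxy (hint x y hx hxy) (_root_.intervalIntegrable_const (c := g y))
      (fun s hs => hg (le_trans hx hs.1) (le_trans hx hxy) hs.2)
    simpa using this
  have hnn : ∀ t ≥ (0:ℝ), 0 ≤ ∫ s in (0:ℝ)..t, g s := by
    intro t ht
    exact integral_nonneg ht (fun s hs => hgnn s hs.1)
  have hsplit : ∀ t > (0:ℝ), (t/2) * g (t/2) ≤ ∫ s in (0:ℝ)..t, g s := by
    intro t ht
    have h2 : (0:ℝ) ≤ t/2 := by linarith
    have h3 : t/2 ≤ t := by linarith
    have := integral_add_adjacent_intervals (hint 0 (t/2) le_rfl h2) (hint (t/2) t h2 h3)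
    calc (t/2) * g (t/2) = (t - t/2) * g (t/2) := by ring_nf
      _ ≤ ∫ s in (t/2)..t, g s := lemA (t/2) t h2 h3
      _ ≤ (∫ s in (0:ℝ)..(t/2), g s) + ∫ s in (t/2)..t, g s := by
          have h4 : (0:ℝ) ≤ ∫ s in (0:ℝ)..(t/2), g s :=
            integral_nonneg h2 (fun s hs => hgnn s hs.1)
          linarith
      _ = ∫ s in (0:ℝ)..t, g s := this
  refine ⟨?_, hnn, by simp, ?_, ?_, ?_⟩
  · -- convexity
    refine convexOn_of_slope_mono_adjacent (convex_Ici 0) ?_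
    intro x y z hx hz hxy hyz
    have hx0 : (0:ℝ) ≤ x := hx
    have hy0 : (0:ℝ) ≤ y := le_trans hx0 hxy.le
    have hFxy : (∫ s in (0:ℝ)..y, g s) - (∫ s in (0:ℝ)..x, g s) = ∫ s in x..y, g s :=
      integral_interval_sub_left (hint 0 y le_rfl hy0) (hint 0 x le_rfl hx0)
    have hFyz : (∫ s in (0:ℝ)..z, g s) - (∫ s in (0:ℝ)..y, g s) = ∫ s in y..z, g s :=
      integral_interval_sub_left (hint 0 z le_rfl (le_trans hy0 hyz.le)) (hint 0 y le_rfl hy0)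
    rw [hFxy, hFyz]
    have h1 : (∫ s in x..y, g s) / (y - x) ≤ g y := by
      rw [div_le_iff₀ (by linarith)]
      have := lemB x y hx0 hxy.le
      linarith [this]
    have h2 : g y ≤ (∫ s in y..z, g s) / (z - y) := by
      rw [le_div_iff₀ (by linarith)]
      have := lemA y z hy0 hyz.le
      linarith [this]
    exact le_trans h1 h2
  · intro t ht
    calc (0:ℝ) < (t/2) * g (t/2) :=
          mul_pos (by linarith) (hgpos _ (by linarith))
      _ ≤ _ := hsplit t ht
  · -- limit at 0
    apply squeeze_zero' (g := g)
    · filter_upwards [self_mem_nhdsWithin] with t ht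
      exact div_nonneg (hnn t (le_of_lt ht)) (le_of_lt ht)
    · filter_upwards [self_mem_nhdsWithin] with t ht
      rw [div_le_iff₀ ht]
      have := lemB 0 t le_rfl (le_of_lt ht)
      simpa [mul_comm] using this
    · exact hglim
  · -- at top
    refine tendsto_atTop_mono' atTop (f₁ := fun t => g (t/2) / 2) ?_ ?_
    · filter_upwards [eventually_gt_atTop (0:ℝ)] with t ht
      rw [div_le_div_iff₀ (by norm_num) ht]
      have := hsplit t ht
      nlinarith [this]
    · have h2 : Filter.Tendsto (fun t : ℝ => t/2) atTop atTop :=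
        tendsto_id.atTop_div_const (by norm_num)
      exact (hgtop.comp h2).atTop_div_const (by norm_num)

/-- For an N-function `φ` with right-derivative `φ'` and `a ≥ 0`, the shifted
function `φ_a(t) = ∫₀^t φ'(a+s)·s/(a+s) ds` is again an N-function. -/
theorem shifted_N_function_is_N_function
    (φ φ' : ℝ → ℝ)
    (hN : IsNFunction φ)
    (hφ : ∀ t ≥ (0:ℝ), φ t = ∫ s in (0:ℝ)..t, φ' s)
    (hmono : MonotoneOn φ' (Set.Ici 0))
    (h0 : φ' 0 = 0) (hpos : ∀ t > (0:ℝ), 0 < φ' t)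
    (htop : Filter.Tendsto φ' Filter.atTop Filter.atTop)
    (a : ℝ) (ha : 0 ≤ a) :
    IsNFunction (fun t => ∫ s in (0:ℝ)..t, φ' (a + s) * s / (a + s)) := by
  set g : ℝ → ℝ := fun s => φ' (a + s) * s / (a + s) with hgdef
  have hφnn : ∀ t ≥ (0:ℝ), 0 ≤ φ' t := fun t ht => h0 ▸ hmono Set.self_mem_Ici ht ht
  -- monotonicity of the ratio s ↦ s/(a+s)
  have hratio : ∀ s₁ s₂ : ℝ, 0 ≤ s₁ → s₁ ≤ s₂ → s₁ / (a + s₁) ≤ s₂ / (a + s₂) := by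
    intro s₁ s₂ h1 h12
    rcases eq_or_lt_of_le (by linarith : (0:ℝ) ≤ a + s₁) with h | h
    · rw [← h, div_zero]
      exact div_nonneg (by linarith) (by linarith)
    · rw [div_le_div_iff₀ h (by linarith)]
      nlinarith
  have hratio_nn : ∀ s : ℝ, 0 ≤ s → 0 ≤ s / (a + s) :=
    fun s hs => div_nonneg hs (by linarith)
  have hgmono : MonotoneOn g (Set.Ici 0) := by
    intro s₁ h1 s₂ h2 h12
    simp only [hgdef, mul_div_assoc]
    exact mul_le_mul (hmono (by simp at h1 ⊢; linarith) (by simp at h2 ⊢; linarith)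
        (by simp at h1 h2 ⊢; linarith)) (hratio s₁ s₂ h1 h12) (hratio_nn s₁ h1)
      (hφnn _ (by simp at h2; linarith))
  have hg0 : g 0 = 0 := by simp [hgdef]
  have hgpos : ∀ t > (0:ℝ), 0 < g t := by
    intro t ht
    exact div_pos (mul_pos (hpos _ (by linarith)) ht) (by linarith)
  have hgtop : Filter.Tendsto g Filter.atTop Filter.atTop := by
    refine tendsto_atTop_mono' atTop (f₁ := fun t => φ' (a + t) / 2) ?_ ?_
    · filter_upwards [eventually_ge_atTop (max a 1)] with t ht
      have ht1 : (1:ℝ) ≤ t := le_trans (le_max_right a 1) ht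
      have hta : a ≤ t := le_trans (le_max_left a 1) ht
      have hat : (0:ℝ) < a + t := by linarith
      have hhalf : (1:ℝ)/2 ≤ t / (a + t) := by
        rw [div_le_div_iff₀ (by norm_num) hat]; linarith
      have : φ' (a + t) * (1/2) ≤ φ' (a + t) * (t / (a + t)) :=
        mul_le_mul_of_nonneg_left hhalf (hφnn _ (by linarith))
      calc φ' (a + t) / 2 = φ' (a + t) * (1/2) := by ring
        _ ≤ φ' (a + t) * (t / (a + t)) := this
        _ = g t := by simp [hgdef, mul_div_assoc]
    · have h1 : Filter.Tendsto (fun t : ℝ => a + t) atTop atTop :=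
        tendsto_atTop_add_const_left _ a tendsto_id
      exact (htop.comp h1).atTop_div_const (by norm_num)
  have hglim : Filter.Tendsto g (nhdsWithin 0 (Set.Ioi 0)) (nhds 0) := by
    rcases eq_or_lt_of_le ha with rfl | hapos
    · -- a = 0 : g t = φ' t for t > 0
      have hφint : ∀ x y : ℝ, 0 ≤ x → x ≤ y → IntervalIntegrable φ' MeasureTheory.volume x y := by
        intro x y hx hxy
        refine (hmono.mono ?_).intervalIntegrable
        rw [Set.uIcc_of_le hxy]
        exact fun s hs => le_trans hx hs.1
      have key : ∀ t > (0:ℝ), φ' t ≤ φ (2*t) / t := by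
        intro t ht
        rw [le_div_iff₀ ht]
        have h2t : (0:ℝ) ≤ 2*t := by linarith
        have hsplit := integral_add_adjacent_intervals (hφint 0 t le_rfl ht.le)
          (hφint t (2*t) ht.le (by linarith))
        have h1 : (0:ℝ) ≤ ∫ s in (0:ℝ)..t, φ' s :=
          integral_nonneg ht.le (fun s hs => hφnn s hs.1)
        have h2 : (2*t - t) * φ' t ≤ ∫ s in t..(2*t), φ' s := by
          have := integral_mono_on (by linarith : t ≤ 2*t)
            (_root_.intervalIntegrable_const (c := φ' t)) (hφint t (2*t) ht.le (by linarith))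
            (fun s hs => hmono ht.le (le_trans ht.le hs.1) hs.1)
          simpa using this
        have hphival := hφ (2*t) h2t
        rw [hphival]
        nlinarith
      have hcomp : Filter.Tendsto (fun t : ℝ => φ (2*t) / t) (nhdsWithin 0 (Set.Ioi 0)) (nhds 0) := by
        have h2t : Filter.Tendsto (fun t : ℝ => 2*t) (nhdsWithin 0 (Set.Ioi 0))
            (nhdsWithin 0 (Set.Ioi 0)) := by
          apply tendsto_nhdsWithin_of_tendsto_nhds_of_eventually_within
          · have : Filter.Tendsto (fun t : ℝ => 2*t) (nhds 0) (nhds (2*0)) :=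
              (continuous_const.mul continuous_id).tendsto 0
            simpa using this.mono_left nhdsWithin_le_nhds
          · filter_upwards [self_mem_nhdsWithin] with t ht
            simp only [Set.mem_Ioi] at ht ⊢; linarith
        have hc := hN.2.2.2.2.1.comp h2t
        have hc2 := hc.const_mul (2:ℝ)
        rw [mul_zero] at hc2
        refine hc2.congr' ?_
        filter_upwards [self_mem_nhdsWithin] with t ht
        simp only [Set.mem_Ioi] at ht
        simp only [Function.comp_apply]
        field_simp
      apply squeeze_zero' (g := fun t => φ (2*t) / t)
      · filter_upwards [self_mem_nhdsWithin] with t ht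
        exact le_of_lt (hgpos t ht)
      · filter_upwards [self_mem_nhdsWithin] with t ht
        simp only [Set.mem_Ioi] at ht
        have : g t = φ' t := by
          simp only [hgdef, zero_add]
          field_simp
        rw [this]
        exact key t ht
      · exact hcomp
    · -- a > 0
      apply squeeze_zero' (g := fun t => φ' (a+1) * t / a)
      · filter_upwards [self_mem_nhdsWithin] with t ht
        exact le_of_lt (hgpos t ht)
      · filter_upwards [Ioo_mem_nhdsGT_of_mem (by norm_num : (0:ℝ) ∈ Set.Ico (0:ℝ) 1)]
          with t ht
        obtain ⟨ht0, ht1⟩ := ht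
        have h1 : φ' (a + t) ≤ φ' (a + 1) :=
          hmono (by simp; linarith) (by simp; linarith) (by linarith)
        have h2 : t / (a + t) ≤ t / a :=
          div_le_div_of_nonneg_left ht0.le hapos (by linarith)
        calc g t = φ' (a + t) * (t / (a + t)) := by simp [hgdef, mul_div_assoc]
          _ ≤ φ' (a + 1) * (t / a) :=
            mul_le_mul h1 h2 (hratio_nn t ht0.le) (hφnn _ (by linarith))
          _ = φ' (a+1) * t / a := by ring
      · have hcont : Continuous (fun t : ℝ => φ' (a+1) * t / a) :=
          (continuous_const.mul continuous_id).div_const a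
        have := hcont.tendsto 0
        simp only [mul_zero, zero_div] at this
        exact this.mono_left nhdsWithin_le_nhds
  exact integral_of_monotone_isNFunction g hgmono hg0 hgpos hglim hgtop
end

section
/- Let φ : ℝ_{≥0} → ℝ_{≥0} be an N-function. Then for every ε ∈ (0, 1] there exists a constant c_ε > 0 (one may take c_ε depending on the Δ₂-constant of φ* and ε) such that the ε-Young inequality s·t ≤ c_ε φ*(s) + ε φ(t) holds for all s, t ≥ 0, provided φ* satisfies the Δ₂-condition. -/
/-- **ε-Young inequality.** If `φ` is an N-function whose conjugate `φ*`
satisfies the Δ₂-condition, then for every `ε ∈ (0, 1]` there is `c_ε > 0`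
with `s·t ≤ c_ε φ*(s) + ε φ(t)` for all `s, t ≥ 0`. -/
theorem eps_young_inequality
    (φ φstar : ℝ → ℝ) (hN : IsNFunction φ)
    (hφstar : ∀ s ≥ (0:ℝ), IsLUB ((fun t => s * t - φ t) '' Set.Ici 0) (φstar s))
    (C : ℝ) (hΔ : ∀ s ≥ (0:ℝ), φstar (2 * s) ≤ C * φstar s) :
    ∀ ε ∈ Set.Ioc (0:ℝ) 1, ∃ c > (0:ℝ), ∀ s ≥ (0:ℝ), ∀ t ≥ (0:ℝ),
      s * t ≤ c * φstar s + ε * φ t := by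
  obtain ⟨hconv, hnn, hzero, hpos, hlim0, hlimtop⟩ := hN
  -- Young's inequality
  have young : ∀ s ≥ (0:ℝ), ∀ t ≥ (0:ℝ), s * t ≤ φstar s + φ t := by
    intro s hs t ht
    have h := (hφstar s hs).1 ⟨t, ht, rfl⟩
    simp only at h
    linarith
  have hstar_nonneg : ∀ s ≥ (0:ℝ), 0 ≤ φstar s := by
    intro s hs
    have h := (hφstar s hs).1 ⟨0, Set.self_mem_Ici, rfl⟩
    simp only [mul_zero, hzero, sub_zero] at h
    exact h
  have hmono : ∀ s ≥ (0:ℝ), ∀ s', s ≤ s' → φstar s ≤ φstar s' := by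
    intro s hs s' hss'
    have hs' : (0:ℝ) ≤ s' := hs.trans hss'
    apply (hφstar s hs).2
    rintro x ⟨t, ht, rfl⟩
    have h1 : s * t ≤ s' * t := mul_le_mul_of_nonneg_right hss' ht
    have h2 := (hφstar s' hs').1 ⟨t, ht, rfl⟩
    simp only at h2 ⊢
    linarith
  -- φstar 1 > 0
  have h1pos : 0 < φstar 1 := by
    have hev : ∀ᶠ t in nhdsWithin 0 (Set.Ioi 0), φ t / t < 1 :=
      hlim0.eventually_lt_const one_pos
    have hev' : ∀ᶠ t in nhdsWithin 0 (Set.Ioi 0), t ∈ Set.Ioi (0:ℝ) :=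
      Filter.eventually_of_mem self_mem_nhdsWithin fun x hx => hx
    obtain ⟨t, hlt, ht⟩ := (hev.and hev').exists
    have ht0 : (0:ℝ) < t := ht
    have hφt : φ t < t := (div_lt_one ht0).mp hlt
    have h := (hφstar 1 (by norm_num)).1 ⟨t, ht0.le, rfl⟩
    simp only [one_mul] at h
    linarith
  -- C > 0
  have hC : 0 < C := by
    have h12 : φstar 1 ≤ φstar 2 := hmono 1 (by norm_num) 2 (by norm_num)
    have h2 : φstar (2 * 1) ≤ C * φstar 1 := hΔ 1 (by norm_num)
    rw [mul_one] at h2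
    nlinarith
  -- iterated Δ₂
  have hpow : ∀ n : ℕ, ∀ s ≥ (0:ℝ), φstar (2 ^ n * s) ≤ C ^ n * φstar s := by
    intro n
    induction n with
    | zero => intro s hs; simp
    | succ n ih =>
      intro s hs
      have h2s : (0:ℝ) ≤ 2 ^ n * s := by positivity
      calc φstar (2 ^ (n + 1) * s) = φstar (2 * (2 ^ n * s)) := by
            rw [show (2:ℝ) ^ (n + 1) * s = 2 * (2 ^ n * s) by ring]
        _ ≤ C * φstar (2 ^ n * s) := hΔ _ h2s
        _ ≤ C * (C ^ n * φstar s) := mul_le_mul_of_nonneg_left (ih s hs) hC.le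
        _ = C ^ (n + 1) * φstar s := by ring
  intro ε hε
  obtain ⟨hε0, hε1⟩ := hε
  obtain ⟨n, hn⟩ := pow_unbounded_of_one_lt (1 / ε) (one_lt_two (α := ℝ))
  refine ⟨ε * C ^ n, by positivity, ?_⟩
  intro s hs t ht
  have hse : (0:ℝ) ≤ s / ε := by positivity
  have hy := young (s / ε) hse t ht
  have h1 : s / ε ≤ 2 ^ n * s := by
    calc s / ε = s * (1 / ε) := by ring
      _ ≤ s * 2 ^ n := mul_le_mul_of_nonneg_left hn.le hs
      _ = 2 ^ n * s := mul_comm _ _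
  have h2 : φstar (s / ε) ≤ C ^ n * φstar s :=
    (hmono _ hse _ h1).trans (hpow n s hs)
  have h3 : ε * (s / ε * t) ≤ ε * (φstar (s / ε) + φ t) :=
    mul_le_mul_of_nonneg_left hy hε0.le
  have h4 : ε * (s / ε * t) = s * t := by field_simp
  have h5 : ε * φstar (s / ε) ≤ ε * (C ^ n * φstar s) :=
    mul_le_mul_of_nonneg_left h2 hε0.le
  nlinarith [h3, h4, h5]
end
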